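/- arXiv:2010.04851 — 9 statements merged into one kernel-verified Lean document; each statement's English description precedes it below -/
import Mathlib

section
/- Let σ > 0 and N > 0 be reals, C a natural number, v : Fin C → ℝ, j* : Fin C, and γ > 0 with v j* - v j ≥ γ for all j ≠ j*. Let μ be the product measure on (Fin C → ℝ) whose coordinates are i.i.d. centered real Gaussian measures with variance σ²/N² (Measure.pi of gaussianReal 0 (σ²/N²)). Then μ {z | ∀ j ≠ j*, v j* + z j* > v j + z j} ≥ 1 - C · exp(-N²γ²/(8σ²)); that is, with probability at least 1 - C·exp(-N²γ²/(8σ²)) the privately released label (the argmax of the noisy votes v + z) matches the majority vote without noise. -/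
open MeasureTheory ProbabilityTheory Real Set

lemma gauss_pdf_mul (w : NNReal) (hw : w ≠ 0) (t x : ℝ) :
    Real.exp (t * x) * gaussianPDFReal 0 w x =
      Real.exp ((w : ℝ) * t ^ 2 / 2) * gaussianPDFReal ((w : ℝ) * t) w x := by
  have hw' : (w : ℝ) ≠ 0 := by exact_mod_cast hw
  unfold gaussianPDFReal
  have h1 : Real.exp (t * x) * ((√(2 * π * (w : ℝ)))⁻¹ * rexp (-(x - 0) ^ 2 / (2 * (w : ℝ))))
      = (√(2 * π * (w : ℝ)))⁻¹ * rexp (t * x + -(x - 0) ^ 2 / (2 * (w : ℝ))) := by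
    rw [Real.exp_add]; ring
  have h2 : Real.exp ((w : ℝ) * t ^ 2 / 2) *
        ((√(2 * π * (w : ℝ)))⁻¹ * rexp (-(x - (w : ℝ) * t) ^ 2 / (2 * (w : ℝ))))
      = (√(2 * π * (w : ℝ)))⁻¹ *
        rexp ((w : ℝ) * t ^ 2 / 2 + -(x - (w : ℝ) * t) ^ 2 / (2 * (w : ℝ))) := by
    rw [Real.exp_add]; ring
  rw [h1, h2]
  congr 1
  field_simp
  ring

lemma gauss_exp_integrable (w : NNReal) (hw : w ≠ 0) (t : ℝ) :
    Integrable (fun x => Real.exp (t * x)) (gaussianReal 0 w) := by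
  rw [gaussianReal_of_var_ne_zero _ hw, gaussianPDF_def]
  rw [integrable_withDensity_iff ((measurable_gaussianPDFReal 0 w).ennreal_ofReal) (ae_of_all _ fun x => ENNReal.ofReal_lt_top)]
  have : (fun x => Real.exp (t * x) * (ENNReal.ofReal (gaussianPDFReal 0 w x)).toReal)
      = fun x => Real.exp ((w : ℝ) * t ^ 2 / 2) * gaussianPDFReal ((w : ℝ) * t) w x := by
    funext x
    rw [ENNReal.toReal_ofReal (gaussianPDFReal_nonneg _ _ _), gauss_pdf_mul w hw]
  rw [this]
  exact (integrable_gaussianPDFReal _ _).const_mul _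

lemma gauss_mgf (w : NNReal) (hw : w ≠ 0) (t : ℝ) :
    ∫ x, Real.exp (t * x) ∂(gaussianReal 0 w) = Real.exp ((w : ℝ) * t ^ 2 / 2) := by
  rw [gaussianReal_of_var_ne_zero _ hw, gaussianPDF_def]
  have hd : (fun x => ENNReal.ofReal (gaussianPDFReal 0 w x)) =
      fun x => ((gaussianPDFReal 0 w x).toNNReal : ENNReal) := rfl
  rw [hd, integral_withDensity_eq_integral_smul ((measurable_gaussianPDFReal 0 w).real_toNNReal)]
  have : (fun x => ((gaussianPDFReal 0 w x).toNNReal) • Real.exp (t * x))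
      = fun x => Real.exp ((w : ℝ) * t ^ 2 / 2) * gaussianPDFReal ((w : ℝ) * t) w x := by
    funext x
    rw [NNReal.smul_def, smul_eq_mul, Real.coe_toNNReal _ (gaussianPDFReal_nonneg _ _ _),
      mul_comm, gauss_pdf_mul w hw]
  rw [this, integral_const_mul, integral_gaussianPDFReal_eq_one _ hw, mul_one]

lemma gauss_tail_upper (w : NNReal) (hw : w ≠ 0) (t : ℝ) (ht : 0 ≤ t) :
    (gaussianReal 0 w {x | t ≤ x}).toReal ≤ Real.exp (-(t ^ 2) / (2 * w)) := by
  have hw' : (0 : ℝ) < w := lt_of_le_of_ne w.coe_nonneg (by exact_mod_cast hw.symm)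
  have h := measure_ge_le_exp_mul_mgf (μ := gaussianReal 0 w) (X := id) (t := t / w) t
    (by positivity) (gauss_exp_integrable w hw _)
  rw [mgf] at h
  simp only [id_eq] at h
  rw [gauss_mgf w hw] at h
  refine h.trans (le_of_eq ?_)
  rw [← Real.exp_add]
  congr 1
  field_simp
  ring

lemma gauss_tail_lower (w : NNReal) (hw : w ≠ 0) (t : ℝ) (ht : 0 ≤ t) :
    (gaussianReal 0 w {x | x ≤ -t}).toReal ≤ Real.exp (-(t ^ 2) / (2 * w)) := by
  have hw' : (0 : ℝ) < w := lt_of_le_of_ne w.coe_nonneg (by exact_mod_cast hw.symm)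
  have h := measure_le_le_exp_mul_mgf (μ := gaussianReal 0 w) (X := id) (t := -(t / w)) (-t)
    (neg_nonpos.mpr (by positivity)) (gauss_exp_integrable w hw _)
  rw [mgf] at h
  simp only [id_eq] at h
  rw [gauss_mgf w hw] at h
  refine h.trans (le_of_eq ?_)
  rw [← Real.exp_add]
  congr 1
  field_simp
  ring

theorem stmt_1 (σ N : ℝ) (hσ : 0 < σ) (hN : 0 < N) (C : ℕ) (v : Fin C → ℝ)
    (jstar : Fin C) (γ : ℝ) (hγ : 0 < γ)
    (hmargin : ∀ j ≠ jstar, v jstar - v j ≥ γ) :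
    ((Measure.pi fun _ : Fin C => gaussianReal 0 ((σ ^ 2 / N ^ 2).toNNReal))
        {z : Fin C → ℝ | ∀ j ≠ jstar, v jstar + z jstar > v j + z j}).toReal ≥
      1 - C * Real.exp (-(N ^ 2 * γ ^ 2) / (8 * σ ^ 2)) := by
  classical
  set w : NNReal := (σ ^ 2 / N ^ 2).toNNReal with hwdef
  have hvpos : (0 : ℝ) < σ ^ 2 / N ^ 2 := by positivity
  have hwR : (w : ℝ) = σ ^ 2 / N ^ 2 := Real.coe_toNNReal _ hvpos.le
  have hw : w ≠ 0 := by
    intro h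
    rw [h] at hwR
    simp at hwR
    linarith
  set μ := Measure.pi fun _ : Fin C => gaussianReal 0 w with hμ
  set G : Set (Fin C → ℝ) := {z | ∀ j ≠ jstar, v jstar + z jstar > v j + z j} with hG
  have hGm : MeasurableSet G := by
    have : G = ⋂ j, ⋂ (_ : j ≠ jstar), {z : Fin C → ℝ | v j + z j < v jstar + z jstar} := by
      ext z; simp [hG, Set.mem_iInter]
    rw [this]
    refine MeasurableSet.iInter fun j => MeasurableSet.iInter fun _ => ?_
    exact measurableSet_lt (by fun_prop) (by fun_prop)
  -- per-coordinate bad sets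
  set A : Fin C → Set ℝ := fun j => if j = jstar then Set.Iic (-(γ / 2)) else Set.Ici (γ / 2)
    with hA
  set S : Fin C → Set (Fin C → ℝ) := fun j => Function.eval j ⁻¹' A j with hS
  have hsub : Gᶜ ⊆ ⋃ j, S j := by
    intro z hz
    simp only [hG, Set.mem_compl_iff, Set.mem_setOf_eq, not_forall] at hz
    obtain ⟨j, hj, hle⟩ := hz
    push_neg at hle
    by_contra hnot
    simp only [Set.mem_iUnion, not_exists] at hnot
    have h1 := hnot jstar
    have h2 := hnot j
    simp only [hS, hA, Set.mem_preimage, Function.eval, if_pos rfl, if_neg hj,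
      if_true, Set.mem_Iic, Set.mem_Ici, not_le] at h1 h2
    have := hmargin j hj
    linarith
  -- measure of each bad set
  have hcoord : ∀ j, μ (S j) = gaussianReal 0 w (A j) := by
    intro j
    rw [hμ, hS]
    simp only
    rw [Set.eval_preimage]
    rw [Measure.pi_pi]
    rw [Fintype.prod_eq_single j (fun i hi => by simp [Function.update_of_ne hi])]
    simp
  have hEbd : ∀ j, (μ (S j)).toReal ≤ Real.exp (-(N ^ 2 * γ ^ 2) / (8 * σ ^ 2)) := by
    intro j
    rw [hcoord j]
    have harith : -((γ / 2) ^ 2) / (2 * (w : ℝ)) = -(N ^ 2 * γ ^ 2) / (8 * σ ^ 2) := by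
      rw [hwR]
      field_simp
      ring
    by_cases hj : j = jstar
    · have := gauss_tail_lower w hw (γ / 2) (by positivity)
      rw [harith] at this
      simpa [hA, hj, Set.Iic] using this
    · have := gauss_tail_upper w hw (γ / 2) (by positivity)
      rw [harith] at this
      simpa [hA, hj, Set.Ici] using this
  -- union bound
  have hcompl : (μ Gᶜ).toReal ≤ C * Real.exp (-(N ^ 2 * γ ^ 2) / (8 * σ ^ 2)) := by
    have h1 : μ Gᶜ ≤ ∑ j, μ (S j) :=
      (measure_mono hsub).trans (measure_iUnion_fintype_le _ _)
    have hne : (∑ j, μ (S j)) ≠ ⊤ :=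
      (ENNReal.sum_lt_top.mpr fun j _ => measure_lt_top _ _).ne
    calc (μ Gᶜ).toReal ≤ (∑ j, μ (S j)).toReal := ENNReal.toReal_mono hne h1
      _ = ∑ j, (μ (S j)).toReal := ENNReal.toReal_sum fun j _ => measure_ne_top _ _
      _ ≤ ∑ _j : Fin C, Real.exp (-(N ^ 2 * γ ^ 2) / (8 * σ ^ 2)) :=
          Finset.sum_le_sum fun j _ => hEbd j
      _ = C * Real.exp (-(N ^ 2 * γ ^ 2) / (8 * σ ^ 2)) := by
          simp [Finset.sum_const, nsmul_eq_mul]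
  have hprob : (μ G).toReal + (μ Gᶜ).toReal = 1 := by
    have := measure_add_measure_compl (μ := μ) hGm
    have h2 : (μ G + μ Gᶜ).toReal = (1 : ENNReal).toReal := by rw [this, measure_univ]
    rwa [ENNReal.toReal_add (measure_ne_top _ _) (measure_ne_top _ _), ENNReal.toReal_one] at h2
  have : (μ G).toReal = 1 - (μ Gᶜ).toReal := by linarith
  rw [ge_iff_le, this]
  linarith
end

section
/- Let σ > 0, let α > 1 be real, and let μ₁, μ₂ ∈ ℝ. Then ∫ x, (gaussianPDFReal μ₁ σ² x)^α · (gaussianPDFReal μ₂ σ² x)^(1-α) dx = exp(α·(α-1)·(μ₁-μ₂)²/(2σ²)), where the integral is over ℝ with Lebesgue measure. Equivalently, the Rényi divergence of order α between N(μ₁, σ²) and N(μ₂, σ²), defined as (1/(α-1))·log of the above integral, equals α·(μ₁-μ₂)²/(2σ²). -/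
open MeasureTheory ProbabilityTheory

theorem stmt_2 (σ : ℝ) (hσ : 0 < σ) (α : ℝ) (hα : 1 < α) (μ₁ μ₂ : ℝ) :
    (∫ x : ℝ, (gaussianPDFReal μ₁ ((σ ^ 2).toNNReal) x) ^ α *
        (gaussianPDFReal μ₂ ((σ ^ 2).toNNReal) x) ^ (1 - α)) =
      Real.exp (α * (α - 1) * (μ₁ - μ₂) ^ 2 / (2 * σ ^ 2)) ∧
    (1 / (α - 1)) * Real.log (∫ x : ℝ, (gaussianPDFReal μ₁ ((σ ^ 2).toNNReal) x) ^ α *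
        (gaussianPDFReal μ₂ ((σ ^ 2).toNNReal) x) ^ (1 - α)) =
      α * (μ₁ - μ₂) ^ 2 / (2 * σ ^ 2) := by
  set v : NNReal := (σ ^ 2).toNNReal with hv
  have hσ2 : (0:ℝ) < σ ^ 2 := by positivity
  have hvv : (v : ℝ) = σ ^ 2 := Real.coe_toNNReal _ hσ2.le
  have hvne : v ≠ 0 := by
    simp only [hv, ne_eq, ← NNReal.coe_eq_zero]
    rw [Real.coe_toNNReal _ hσ2.le]
    exact hσ2.ne'
  set m : ℝ := α * μ₁ + (1 - α) * μ₂ with hm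
  set C : ℝ := Real.exp (α * (α - 1) * (μ₁ - μ₂) ^ 2 / (2 * σ ^ 2)) with hC
  have hs : (0:ℝ) < Real.sqrt (2 * Real.pi * v) := by
    apply Real.sqrt_pos.2
    rw [hvv]
    positivity
  have key : ∀ x : ℝ,
      (gaussianPDFReal μ₁ v x) ^ α * (gaussianPDFReal μ₂ v x) ^ (1 - α) =
        C * gaussianPDFReal m v x := by
    intro x
    simp only [gaussianPDFReal]
    rw [Real.mul_rpow (by positivity) (Real.exp_pos _).le,
        Real.mul_rpow (by positivity) (Real.exp_pos _).le,
        ← Real.exp_mul, ← Real.exp_mul]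
    have hinv : ((Real.sqrt (2 * Real.pi * ↑v))⁻¹) ^ α *
        ((Real.sqrt (2 * Real.pi * ↑v))⁻¹) ^ (1 - α) =
        (Real.sqrt (2 * Real.pi * ↑v))⁻¹ := by
      rw [← Real.rpow_add (by positivity)]
      norm_num
    calc (Real.sqrt (2 * Real.pi * ↑v))⁻¹ ^ α * Real.exp (-(x - μ₁) ^ 2 / (2 * ↑v) * α) *
          ((Real.sqrt (2 * Real.pi * ↑v))⁻¹ ^ (1 - α) *
            Real.exp (-(x - μ₂) ^ 2 / (2 * ↑v) * (1 - α)))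
        = ((Real.sqrt (2 * Real.pi * ↑v))⁻¹ ^ α * (Real.sqrt (2 * Real.pi * ↑v))⁻¹ ^ (1 - α)) *
          (Real.exp (-(x - μ₁) ^ 2 / (2 * ↑v) * α) *
            Real.exp (-(x - μ₂) ^ 2 / (2 * ↑v) * (1 - α))) := by ring
      _ = C * ((Real.sqrt (2 * Real.pi * ↑v))⁻¹ * Real.exp (-(x - m) ^ 2 / (2 * ↑v))) := by
          rw [hinv, ← Real.exp_add]
          simp only [hC]
          have harg : -(x - μ₁) ^ 2 / (2 * (v:ℝ)) * α + -(x - μ₂) ^ 2 / (2 * (v:ℝ)) * (1 - α)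
              = -(x - m) ^ 2 / (2 * (v:ℝ)) + α * (α - 1) * (μ₁ - μ₂) ^ 2 / (2 * σ ^ 2) := by
            rw [hvv]
            field_simp
            ring
          rw [harg, Real.exp_add]
          ring
  have hint : (∫ x : ℝ, (gaussianPDFReal μ₁ v x) ^ α * (gaussianPDFReal μ₂ v x) ^ (1 - α)) = C := by
    simp_rw [key]
    rw [integral_const_mul, integral_gaussianPDFReal_eq_one m hvne, mul_one]
  refine ⟨hint, ?_⟩
  rw [hint, hC, Real.log_exp]
  have : α - 1 ≠ 0 := by linarith
  field_simp
end

section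
/- Let σ > 0, α > 1 real, C a natural number, and u, u' : Fin C → ℝ. Then ∫ x, ∏_{j : Fin C} (gaussianPDFReal (u j) σ² (x j))^α · (gaussianPDFReal (u' j) σ² (x j))^(1-α) ∂(pi Lebesgue measure on Fin C → ℝ) = exp(α·(α-1)·(Σ_j (u j - u' j)²)/(2σ²)). Consequently, if Σ_j (u j - u' j)² ≤ s², the multivariate Gaussian mechanism that adds independent N(0, σ²) noise to each coordinate of a vector with L2-sensitivity s satisfies (α, α·s²/(2σ²))-Rényi differential privacy. -/
open MeasureTheory ProbabilityTheory

lemma gauss_renyi_1d (σ : ℝ) (hσ : 0 < σ) (α : ℝ) (μ μ' : ℝ) :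
    ∫ x : ℝ, (gaussianPDFReal μ ((σ ^ 2).toNNReal) x) ^ α *
        (gaussianPDFReal μ' ((σ ^ 2).toNNReal) x) ^ (1 - α) =
      Real.exp (α * (α - 1) * (μ - μ') ^ 2 / (2 * σ ^ 2)) := by
  have hσ2 : (0 : ℝ) < σ ^ 2 := by positivity
  have hv : ((σ ^ 2).toNNReal : ℝ) = σ ^ 2 := Real.coe_toNNReal _ hσ2.le
  have hvne : (σ ^ 2).toNNReal ≠ 0 := by
    simp only [ne_eq, Real.toNNReal_eq_zero, not_le, hσ2]
  set m : ℝ := α * μ + (1 - α) * μ' with hm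
  set K : ℝ := α * (α - 1) * (μ - μ') ^ 2 / (2 * σ ^ 2) with hK
  have hc : (0 : ℝ) < (Real.sqrt (2 * Real.pi * σ ^ 2))⁻¹ := by
    have : (0 : ℝ) < 2 * Real.pi * σ ^ 2 := by positivity
    positivity
  have hpt : ∀ x : ℝ, (gaussianPDFReal μ ((σ ^ 2).toNNReal) x) ^ α *
      (gaussianPDFReal μ' ((σ ^ 2).toNNReal) x) ^ (1 - α) =
      Real.exp K * gaussianPDFReal m ((σ ^ 2).toNNReal) x := by
    intro x
    simp only [gaussianPDFReal, hv]
    rw [Real.mul_rpow hc.le (Real.exp_pos _).le,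
      Real.mul_rpow hc.le (Real.exp_pos _).le, ← Real.exp_mul, ← Real.exp_mul]
    have hcc : (Real.sqrt (2 * Real.pi * σ ^ 2))⁻¹ ^ α *
        (Real.sqrt (2 * Real.pi * σ ^ 2))⁻¹ ^ (1 - α) =
        (Real.sqrt (2 * Real.pi * σ ^ 2))⁻¹ := by
      rw [← Real.rpow_add hc]
      norm_num
    calc (Real.sqrt (2 * Real.pi * σ ^ 2))⁻¹ ^ α *
          Real.exp (-(x - μ) ^ 2 / (2 * σ ^ 2) * α) *
          ((Real.sqrt (2 * Real.pi * σ ^ 2))⁻¹ ^ (1 - α) *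
          Real.exp (-(x - μ') ^ 2 / (2 * σ ^ 2) * (1 - α)))
        = ((Real.sqrt (2 * Real.pi * σ ^ 2))⁻¹ ^ α *
            (Real.sqrt (2 * Real.pi * σ ^ 2))⁻¹ ^ (1 - α)) *
            Real.exp (-(x - μ) ^ 2 / (2 * σ ^ 2) * α +
              -(x - μ') ^ 2 / (2 * σ ^ 2) * (1 - α)) := by
          rw [Real.exp_add]; ring
      _ = (Real.sqrt (2 * Real.pi * σ ^ 2))⁻¹ *
            Real.exp (K + -(x - m) ^ 2 / (2 * σ ^ 2)) := by
          rw [hcc]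
          congr 1
          rw [hK, hm]
          field_simp
          ring
      _ = Real.exp K * ((Real.sqrt (2 * Real.pi * σ ^ 2))⁻¹ *
            Real.exp (-(x - m) ^ 2 / (2 * σ ^ 2))) := by
          rw [Real.exp_add]; ring
  simp only [hpt]
  rw [integral_const_mul, integral_gaussianPDFReal_eq_one m hvne, mul_one]

theorem stmt_3 (σ : ℝ) (hσ : 0 < σ) (α : ℝ) (hα : 1 < α) (C : ℕ)
    (u u' : Fin C → ℝ) (s : ℝ) :
    (∫ x : Fin C → ℝ, ∏ j : Fin C,
        (gaussianPDFReal (u j) ((σ ^ 2).toNNReal) (x j)) ^ α *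
          (gaussianPDFReal (u' j) ((σ ^ 2).toNNReal) (x j)) ^ (1 - α)
        ∂(Measure.pi fun _ : Fin C => volume)) =
      Real.exp (α * (α - 1) * (∑ j : Fin C, (u j - u' j) ^ 2) / (2 * σ ^ 2)) ∧
    ((∑ j : Fin C, (u j - u' j) ^ 2) ≤ s ^ 2 →
      (1 / (α - 1)) * Real.log (∫ x : Fin C → ℝ, ∏ j : Fin C,
          (gaussianPDFReal (u j) ((σ ^ 2).toNNReal) (x j)) ^ α *
            (gaussianPDFReal (u' j) ((σ ^ 2).toNNReal) (x j)) ^ (1 - α)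
          ∂(Measure.pi fun _ : Fin C => volume)) ≤
        α * s ^ 2 / (2 * σ ^ 2)) := by
  have hσ2 : (0 : ℝ) < σ ^ 2 := by positivity
  have h1 : (∫ x : Fin C → ℝ, ∏ j : Fin C,
      (gaussianPDFReal (u j) ((σ ^ 2).toNNReal) (x j)) ^ α *
        (gaussianPDFReal (u' j) ((σ ^ 2).toNNReal) (x j)) ^ (1 - α)
      ∂(Measure.pi fun _ : Fin C => volume)) =
      Real.exp (α * (α - 1) * (∑ j : Fin C, (u j - u' j) ^ 2) / (2 * σ ^ 2)) := by
    rw [MeasureTheory.integral_fintype_prod_eq_prod (ι := Fin C)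
      (fun j x => (gaussianPDFReal (u j) ((σ ^ 2).toNNReal) x) ^ α *
        (gaussianPDFReal (u' j) ((σ ^ 2).toNNReal) x) ^ (1 - α))]
    simp only [gauss_renyi_1d σ hσ α]
    rw [← Real.exp_sum]
    congr 1
    rw [Finset.mul_sum, Finset.sum_div]
  refine ⟨h1, fun hs => ?_⟩
  rw [h1, Real.log_exp]
  have hα' : α - 1 ≠ 0 := ne_of_gt (by linarith)
  have heq : (1 / (α - 1)) * (α * (α - 1) * (∑ j : Fin C, (u j - u' j) ^ 2) / (2 * σ ^ 2)) =
      α * (∑ j : Fin C, (u j - u' j) ^ 2) / (2 * σ ^ 2) := by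
    field_simp
  rw [heq]
  gcongr
end

section
/- Let σ > 0, α > 1 real, s ≥ 0, and Q, C natural numbers. Let u, u' : Fin Q → Fin C → ℝ satisfy Σ_j (u t j - u' t j)² ≤ s² for every t : Fin Q. Then ∫ x, ∏_{t : Fin Q} ∏_{j : Fin C} (gaussianPDFReal (u t j) σ² (x t j))^α · (gaussianPDFReal (u' t j) σ² (x t j))^(1-α) ∂(pi Lebesgue measure on Fin Q → Fin C → ℝ) = exp(α·(α-1)·(Σ_t Σ_j (u t j - u' t j)²)/(2σ²)) ≤ exp((α-1) · Q·α·s²/(2σ²)). In particular, Q adaptive Gaussian-mechanism queries with per-query L2-sensitivity s and noise scale σ satisfy (α, Q·α·s²/(2σ²))-Rényi differential privacy; taking s² = 1 gives the agent-level guarantee (α, Qα/(2σ²)) of Theorem 1 for both AE-DPFL and kNN-DPFL, taking s² = 2 gives AE-DPFL's instance-level guarantee (α, Qα/σ²), and taking s² = 2/k gives kNN-DPFL's instance-level guarantee (α, Qα/(kσ²)). -/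
open MeasureTheory ProbabilityTheory Real

lemma gauss_renyi_onedim (σ : ℝ) (hσ : 0 < σ) (α : ℝ) (a b : ℝ) :
    ∫ x : ℝ, (gaussianPDFReal a ((σ ^ 2).toNNReal) x) ^ α *
        (gaussianPDFReal b ((σ ^ 2).toNNReal) x) ^ (1 - α) =
      Real.exp (α * (α - 1) * (a - b) ^ 2 / (2 * σ ^ 2)) := by
  have hv : ((σ ^ 2).toNNReal : ℝ) = σ ^ 2 := Real.coe_toNNReal _ (by positivity)
  have hvne : (σ ^ 2).toNNReal ≠ 0 := by
    simp only [ne_eq, ← NNReal.coe_eq_zero, hv]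
    positivity
  have hKpos : 0 < √(2 * π * ((σ ^ 2).toNNReal : ℝ)) := by
    rw [hv]; exact Real.sqrt_pos.2 (by positivity)
  have key : ∀ x : ℝ,
      (gaussianPDFReal a ((σ ^ 2).toNNReal) x) ^ α *
        (gaussianPDFReal b ((σ ^ 2).toNNReal) x) ^ (1 - α)
      = Real.exp (α * (α - 1) * (a - b) ^ 2 / (2 * σ ^ 2)) *
          gaussianPDFReal (α * a + (1 - α) * b) ((σ ^ 2).toNNReal) x := by
    intro x
    simp only [gaussianPDFReal]
    rw [Real.mul_rpow (by positivity) (Real.exp_nonneg _),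
        Real.mul_rpow (by positivity) (Real.exp_nonneg _),
        ← Real.exp_mul, ← Real.exp_mul]
    have hK : (√(2 * π * ((σ ^ 2).toNNReal : ℝ)))⁻¹ ^ α *
        (√(2 * π * ((σ ^ 2).toNNReal : ℝ)))⁻¹ ^ (1 - α)
        = (√(2 * π * ((σ ^ 2).toNNReal : ℝ)))⁻¹ := by
      rw [← Real.rpow_add (by positivity)]
      norm_num
    calc (√(2 * π * ((σ ^ 2).toNNReal : ℝ)))⁻¹ ^ α * Real.exp (-(x - a) ^ 2 / (2 * ((σ ^ 2).toNNReal : ℝ)) * α) *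
          ((√(2 * π * ((σ ^ 2).toNNReal : ℝ)))⁻¹ ^ (1 - α) * Real.exp (-(x - b) ^ 2 / (2 * ((σ ^ 2).toNNReal : ℝ)) * (1 - α)))
        = ((√(2 * π * ((σ ^ 2).toNNReal : ℝ)))⁻¹ ^ α * (√(2 * π * ((σ ^ 2).toNNReal : ℝ)))⁻¹ ^ (1 - α)) *
            (Real.exp (-(x - a) ^ 2 / (2 * ((σ ^ 2).toNNReal : ℝ)) * α) *
             Real.exp (-(x - b) ^ 2 / (2 * ((σ ^ 2).toNNReal : ℝ)) * (1 - α))) := by ring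
      _ = (√(2 * π * ((σ ^ 2).toNNReal : ℝ)))⁻¹ *
            Real.exp (α * (α - 1) * (a - b) ^ 2 / (2 * σ ^ 2) +
              -(x - (α * a + (1 - α) * b)) ^ 2 / (2 * ((σ ^ 2).toNNReal : ℝ))) := by
          rw [hK, ← Real.exp_add]
          congr 1
          rw [hv]
          have h2 : (2 : ℝ) * σ ^ 2 ≠ 0 := by positivity
          field_simp
          ring
      _ = _ := by rw [Real.exp_add]; ring
  simp_rw [key]
  rw [MeasureTheory.integral_const_mul, integral_gaussianPDFReal_eq_one _ hvne, mul_one]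

theorem stmt_4 (σ : ℝ) (hσ : 0 < σ) (α : ℝ) (hα : 1 < α) (s : ℝ) (hs : 0 ≤ s)
    (Q C : ℕ) (u u' : Fin Q → Fin C → ℝ)
    (hsens : ∀ t : Fin Q, (∑ j : Fin C, (u t j - u' t j) ^ 2) ≤ s ^ 2) :
    (∫ x : Fin Q → Fin C → ℝ, ∏ t : Fin Q, ∏ j : Fin C,
        (gaussianPDFReal (u t j) ((σ ^ 2).toNNReal) (x t j)) ^ α *
          (gaussianPDFReal (u' t j) ((σ ^ 2).toNNReal) (x t j)) ^ (1 - α)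
        ∂(Measure.pi fun _ : Fin Q => Measure.pi fun _ : Fin C => volume)) =
      Real.exp (α * (α - 1) * (∑ t : Fin Q, ∑ j : Fin C, (u t j - u' t j) ^ 2) /
        (2 * σ ^ 2)) ∧
    Real.exp (α * (α - 1) * (∑ t : Fin Q, ∑ j : Fin C, (u t j - u' t j) ^ 2) /
        (2 * σ ^ 2)) ≤
      Real.exp ((α - 1) * (Q * α * s ^ 2 / (2 * σ ^ 2))) := by
  constructor
  · have hmeas : (Measure.pi fun _ : Fin Q => Measure.pi fun _ : Fin C => volume)
        = (volume : Measure (Fin Q → Fin C → ℝ)) := by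
      simp_rw [volume_pi]
    rw [hmeas]
    rw [volume_pi, MeasureTheory.integral_fintype_prod_eq_prod (ι := Fin Q)
      (f := fun t (y : Fin C → ℝ) => ∏ j : Fin C,
        (gaussianPDFReal (u t j) ((σ ^ 2).toNNReal) (y j)) ^ α *
          (gaussianPDFReal (u' t j) ((σ ^ 2).toNNReal) (y j)) ^ (1 - α))]
    have hinner : ∀ t : Fin Q, (∫ y : Fin C → ℝ, ∏ j : Fin C,
        (gaussianPDFReal (u t j) ((σ ^ 2).toNNReal) (y j)) ^ α *
          (gaussianPDFReal (u' t j) ((σ ^ 2).toNNReal) (y j)) ^ (1 - α))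
        = Real.exp (α * (α - 1) * (∑ j : Fin C, (u t j - u' t j) ^ 2) / (2 * σ ^ 2)) := by
      intro t
      rw [volume_pi, MeasureTheory.integral_fintype_prod_eq_prod (ι := Fin C)
        (f := fun j (z : ℝ) =>
          (gaussianPDFReal (u t j) ((σ ^ 2).toNNReal) z) ^ α *
            (gaussianPDFReal (u' t j) ((σ ^ 2).toNNReal) z) ^ (1 - α))]
      simp_rw [gauss_renyi_onedim σ hσ α, ← Real.exp_sum]
      congr 1
      rw [Finset.mul_sum, Finset.sum_div]
    simp_rw [hinner, ← Real.exp_sum]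
    congr 1
    rw [Finset.mul_sum, Finset.sum_div]
  · apply Real.exp_le_exp.2
    have hsum : (∑ t : Fin Q, ∑ j : Fin C, (u t j - u' t j) ^ 2) ≤ Q * s ^ 2 := by
      calc (∑ t : Fin Q, ∑ j : Fin C, (u t j - u' t j) ^ 2)
          ≤ ∑ _t : Fin Q, s ^ 2 := Finset.sum_le_sum fun t _ => hsens t
        _ = Q * s ^ 2 := by simp [Finset.sum_const, nsmul_eq_mul]
    have h1 : α * (α - 1) * (∑ t : Fin Q, ∑ j : Fin C, (u t j - u' t j) ^ 2) / (2 * σ ^ 2)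
        ≤ α * (α - 1) * (Q * s ^ 2) / (2 * σ ^ 2) := by
      apply div_le_div_of_nonneg_right ?_ (by positivity)
      exact mul_le_mul_of_nonneg_left hsum (by nlinarith)
    calc _ ≤ α * (α - 1) * (Q * s ^ 2) / (2 * σ ^ 2) := h1
      _ = (α - 1) * (Q * α * s ^ 2 / (2 * σ ^ 2)) := by ring
end

section
/- Let Y be a finite type, and let P, Q : Y → ℝ be probability vectors (P y ≥ 0, Q y > 0, Σ_y P y = 1, Σ_y Q y = 1). Let α > 1 be real, e : Y, q ∈ [0, 1) with Q e ≥ 1 - q, and ε ≥ 0 with Σ_y (P y)^(2α) · (Q y)^(1-2α) ≤ exp((2α-1)·ε). Then Σ_y (P y)^α · (Q y)^(1-α) ≤ (1-q)^(1-α) + sqrt(q) · exp((2α-1)·ε/2). Consequently the Rényi divergence D_α(P‖Q) := (1/(α-1))·log(Σ_y (P y)^α (Q y)^(1-α)) satisfies D_α(P‖Q) ≤ -log(1-q) + (1/(α-1))·log(1 + sqrt(q)·(1-q)^(α-1)·exp((2α-1)·ε/2)). -/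
theorem stmt_6 {Y : Type*} [Fintype Y] (P Q : Y → ℝ)
    (hP : ∀ y, 0 ≤ P y) (hQ : ∀ y, 0 < Q y)
    (hPsum : ∑ y : Y, P y = 1) (hQsum : ∑ y : Y, Q y = 1)
    (α : ℝ) (hα : 1 < α) (e : Y) (q : ℝ) (hq0 : 0 ≤ q) (hq1 : q < 1)
    (hQe : Q e ≥ 1 - q) (ε : ℝ) (hε : 0 ≤ ε)
    (hRDP : ∑ y : Y, (P y) ^ (2 * α) * (Q y) ^ (1 - 2 * α) ≤
      Real.exp ((2 * α - 1) * ε)) :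
    (∑ y : Y, (P y) ^ α * (Q y) ^ (1 - α)) ≤
      (1 - q) ^ (1 - α) + Real.sqrt q * Real.exp ((2 * α - 1) * ε / 2) ∧
    (1 / (α - 1)) * Real.log (∑ y : Y, (P y) ^ α * (Q y) ^ (1 - α)) ≤
      -Real.log (1 - q) + (1 / (α - 1)) * Real.log (1 +
        Real.sqrt q * (1 - q) ^ (α - 1) * Real.exp ((2 * α - 1) * ε / 2)) := by
  classical
  have h1q : (0:ℝ) < 1 - q := by linarith
  have hαm : (0:ℝ) < α - 1 := by linarith
  set E : ℝ := Real.exp ((2 * α - 1) * ε / 2) with hEdef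
  have hEpos : 0 < E := Real.exp_pos _
  have hterm : ∀ y, 0 ≤ P y ^ α * Q y ^ (1 - α) := fun y =>
    mul_nonneg (Real.rpow_nonneg (hP y) _) (Real.rpow_pos_of_pos (hQ y) _).le
  have hterm2 : ∀ y, 0 ≤ P y ^ (2*α) * Q y ^ (1 - 2*α) := fun y =>
    mul_nonneg (Real.rpow_nonneg (hP y) _) (Real.rpow_pos_of_pos (hQ y) _).le
  -- e term bound
  have hPe1 : P e ≤ 1 := by
    have h := Finset.single_le_sum (f := P) (fun y _ => hP y) (Finset.mem_univ e)
    rw [hPsum] at h; exact h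
  have he : P e ^ α * Q e ^ (1 - α) ≤ (1 - q) ^ (1 - α) := by
    have h1 : P e ^ α ≤ 1 := Real.rpow_le_one (hP e) hPe1 (by linarith)
    have h2 : Q e ^ (1 - α) ≤ (1 - q) ^ (1 - α) :=
      Real.rpow_le_rpow_of_nonpos h1q hQe (by linarith)
    calc P e ^ α * Q e ^ (1 - α) ≤ 1 * Q e ^ (1 - α) :=
          mul_le_mul_of_nonneg_right h1 (Real.rpow_pos_of_pos (hQ e) _).le
      _ = Q e ^ (1 - α) := one_mul _
      _ ≤ (1 - q) ^ (1 - α) := h2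
  -- rest term bound via Cauchy-Schwarz
  set s : Finset Y := Finset.univ.erase e with hs
  have hrest : (∑ y ∈ s, P y ^ α * Q y ^ (1 - α)) ≤ Real.sqrt q * E := by
    have hcs := Finset.sum_mul_sq_le_sq_mul_sq s
      (fun y => P y ^ α * Q y ^ ((1 - 2*α)/2)) (fun y => Q y ^ ((1:ℝ)/2))
    have heq : ∀ y, (P y ^ α * Q y ^ ((1 - 2*α)/2)) * Q y ^ ((1:ℝ)/2)
        = P y ^ α * Q y ^ (1 - α) := by
      intro y
      rw [mul_assoc, ← Real.rpow_add (hQ y)]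
      ring_nf
    have heq2 : ∀ y, (P y ^ α * Q y ^ ((1 - 2*α)/2)) ^ 2
        = P y ^ (2*α) * Q y ^ (1 - 2*α) := by
      intro y
      rw [mul_pow, ← Real.rpow_natCast (P y ^ α) 2, ← Real.rpow_mul (hP y),
        ← Real.rpow_natCast (Q y ^ ((1-2*α)/2)) 2, ← Real.rpow_mul (hQ y).le]
      have hc1 : (α * ((2:ℕ):ℝ)) = 2 * α := by push_cast; ring
      have hc2 : ((1-2*α)/2 * ((2:ℕ):ℝ)) = 1 - 2*α := by push_cast; ring
      rw [hc1, hc2]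
    have heq3 : ∀ y, (Q y ^ ((1:ℝ)/2)) ^ 2 = Q y := by
      intro y
      rw [← Real.rpow_natCast (Q y ^ ((1:ℝ)/2)) 2, ← Real.rpow_mul (hQ y).le]
      norm_num
    simp only [heq, heq2, heq3] at hcs
    have hQrest : (∑ y ∈ s, Q y) ≤ q := by
      have h5 := Finset.add_sum_erase _ Q (Finset.mem_univ e)
      rw [hQsum] at h5
      have h6 : (∑ y ∈ s, Q y) = 1 - Q e := by rw [hs]; linarith
      rw [h6]; linarith
    have hP2le : (∑ y ∈ s, P y ^ (2*α) * Q y ^ (1 - 2*α)) ≤ Real.exp ((2*α - 1) * ε) := by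
      refine le_trans (Finset.sum_le_sum_of_subset_of_nonneg (Finset.subset_univ s)
        (fun y _ _ => hterm2 y)) hRDP
    have hQs0 : 0 ≤ ∑ y ∈ s, Q y := Finset.sum_nonneg fun y _ => (hQ y).le
    have hP20 : 0 ≤ ∑ y ∈ s, P y ^ (2*α) * Q y ^ (1 - 2*α) :=
      Finset.sum_nonneg fun y _ => hterm2 y
    have hsq : (∑ y ∈ s, P y ^ α * Q y ^ (1 - α)) ^ 2 ≤ Real.exp ((2*α - 1) * ε) * q :=
      le_trans hcs (mul_le_mul hP2le hQrest hQs0 (Real.exp_pos _).le)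
    have hsum0 : 0 ≤ ∑ y ∈ s, P y ^ α * Q y ^ (1 - α) :=
      Finset.sum_nonneg fun y _ => hterm y
    have h7 := Real.sqrt_le_sqrt hsq
    rw [Real.sqrt_sq hsum0, Real.sqrt_mul (Real.exp_pos _).le] at h7
    have h8 : Real.sqrt (Real.exp ((2*α - 1) * ε)) = E := by
      rw [hEdef, show Real.exp ((2*α - 1) * ε)
        = Real.exp ((2*α - 1) * ε / 2) ^ 2 by rw [sq, ← Real.exp_add]; ring_nf,
        Real.sqrt_sq (Real.exp_pos _).le]
    rw [h8, mul_comm] at h7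
    exact h7
  have hsplit : (∑ y : Y, P y ^ α * Q y ^ (1 - α)) =
      P e ^ α * Q e ^ (1 - α) + ∑ y ∈ s, P y ^ α * Q y ^ (1 - α) :=
    (Finset.add_sum_erase _ _ (Finset.mem_univ e)).symm
  have main : (∑ y : Y, P y ^ α * Q y ^ (1 - α)) ≤ (1 - q) ^ (1 - α) + Real.sqrt q * E := by
    rw [hsplit]; exact add_le_add he hrest
  refine ⟨main, ?_⟩
  -- second part
  have hfact : (1 - q) ^ (1 - α) + Real.sqrt q * E
      = (1 - q) ^ (1 - α) * (1 + Real.sqrt q * (1 - q) ^ (α - 1) * E) := by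
    rw [mul_add, mul_one]
    congr 1
    rw [show (1-q)^(1-α) * (Real.sqrt q * (1-q)^(α-1) * E)
      = ((1-q)^(1-α) * (1-q)^(α-1)) * (Real.sqrt q * E) by ring,
      ← Real.rpow_add h1q]
    norm_num
  -- positivity of the sum
  have hyex : ∃ y, 0 < P y := by
    by_contra h
    push_neg at h
    have : (∑ y : Y, P y) = 0 := le_antisymm (Finset.sum_nonpos fun y _ => h y)
      (Finset.sum_nonneg fun y _ => hP y)
    rw [hPsum] at this; norm_num at this
  obtain ⟨y0, hy0⟩ := hyex
  have hSpos : 0 < ∑ y : Y, P y ^ α * Q y ^ (1 - α) := by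
    refine Finset.sum_pos' (fun y _ => hterm y) ⟨y0, Finset.mem_univ y0, ?_⟩
    exact mul_pos (Real.rpow_pos_of_pos hy0 _) (Real.rpow_pos_of_pos (hQ y0) _)
  have h1pos : (0:ℝ) < 1 + Real.sqrt q * (1 - q) ^ (α - 1) * E := by
    have : 0 ≤ Real.sqrt q * (1 - q) ^ (α - 1) * E :=
      mul_nonneg (mul_nonneg (Real.sqrt_nonneg q) (Real.rpow_pos_of_pos h1q _).le) hEpos.le
    linarith
  have hlog : Real.log (∑ y : Y, P y ^ α * Q y ^ (1 - α)) ≤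
      Real.log ((1 - q) ^ (1 - α)) + Real.log (1 + Real.sqrt q * (1 - q) ^ (α - 1) * E) := by
    rw [← Real.log_mul (Real.rpow_pos_of_pos h1q _).ne' h1pos.ne', ← hfact]
    exact Real.log_le_log hSpos (main)
  have hlogpow : Real.log ((1 - q) ^ (1 - α)) = (1 - α) * Real.log (1 - q) :=
    Real.log_rpow h1q _
  have hinv : 0 < 1 / (α - 1) := by positivity
  calc (1 / (α - 1)) * Real.log (∑ y : Y, P y ^ α * Q y ^ (1 - α))
      ≤ (1 / (α - 1)) * ((1 - α) * Real.log (1 - q)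
          + Real.log (1 + Real.sqrt q * (1 - q) ^ (α - 1) * E)) := by
        refine mul_le_mul_of_nonneg_left ?_ hinv.le
        rw [← hlogpow]; exact hlog
    _ = -Real.log (1 - q) + (1 / (α - 1)) * Real.log (1 +
          Real.sqrt q * (1 - q) ^ (α - 1) * E) := by
        field_simp
        ring
end

section
/- Let (X, 𝒜) be a measurable space, P and Q probability measures on X with P absolutely continuous with respect to Q, Y a finite type, f : X → Y a measurable function, and α > 1 real. Assume the lintegral ∫⁻ x, (P.rnDeriv Q x)^α ∂Q is finite. Then Σ_{y : Y} (P (f⁻¹ {y})).toReal^α · (Q (f⁻¹ {y})).toReal^(1-α) ≤ (∫⁻ x, (P.rnDeriv Q x)^α ∂Q).toReal, where terms with Q(f⁻¹{y}) = 0 are interpreted as 0 (in which case also P(f⁻¹{y}) = 0 by absolute continuity). In other words, the order-α Rényi divergence between the pushforward measures f_*P and f_*Q is at most the order-α Rényi divergence between P and Q. -/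
open MeasureTheory

theorem stmt_7 {X : Type*} [MeasurableSpace X] (P Q : Measure X)
    [IsProbabilityMeasure P] [IsProbabilityMeasure Q] (hac : P ≪ Q)
    {Y : Type*} [Fintype Y] [MeasurableSpace Y] [MeasurableSingletonClass Y]
    (f : X → Y) (hf : Measurable f) (α : ℝ) (hα : 1 < α)
    (hfin : (∫⁻ x, (P.rnDeriv Q x) ^ α ∂Q) ≠ ⊤) :
    (∑ y : Y, ((P (f ⁻¹' {y})).toReal) ^ α * ((Q (f ⁻¹' {y})).toReal) ^ (1 - α)) ≤
      (∫⁻ x, (P.rnDeriv Q x) ^ α ∂Q).toReal := by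
  have hα0 : (0:ℝ) < α := lt_trans one_pos hα
  set g := P.rnDeriv Q with hgdef
  have hg : Measurable g := Measure.measurable_rnDeriv P Q
  set A : Y → Set X := fun y => f ⁻¹' {y} with hAdef
  have hA : ∀ y, MeasurableSet (A y) := fun y => hf (measurableSet_singleton y)
  set I : Y → ENNReal := fun y => ∫⁻ x in A y, g x ^ α ∂Q with hIdef
  have hIle : ∀ y, I y ≤ ∫⁻ x, g x ^ α ∂Q := fun y => setLIntegral_le_lintegral _ _
  have hIfin : ∀ y, I y ≠ ⊤ := fun y => (lt_of_le_of_lt (hIle y) hfin.lt_top).ne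
  have key : ∀ y : Y, ((P (A y)).toReal) ^ α * ((Q (A y)).toReal) ^ (1 - α)
      ≤ (I y).toReal := by
    intro y
    by_cases hQ0 : Q (A y) = 0
    · have hP0 : P (A y) = 0 := hac hQ0
      rw [hP0, hQ0]
      simp only [ENNReal.toReal_zero]
      rw [Real.zero_rpow (ne_of_gt hα0), Real.zero_rpow (by linarith : (1:ℝ) - α ≠ 0), zero_mul]
      exact ENNReal.toReal_nonneg
    · set q : ℝ := α / (α - 1) with hqdef
      have hpq : Real.HolderConjugate α q := (Real.holderConjugate_iff_eq_conjExponent hα).2 (by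
        rw [hqdef])
      have hold := ENNReal.lintegral_mul_le_Lp_mul_Lq (Q.restrict (A y)) hpq hg.aemeasurable
        (aemeasurable_const : AEMeasurable (fun _ => (1:ENNReal)) _)
      simp only [Pi.mul_apply, mul_one, ENNReal.one_rpow, lintegral_one, Measure.restrict_apply_univ] at hold
      rw [Measure.setLIntegral_rnDeriv hac] at hold
      -- hold : P (A y) ≤ (I y) ^ (1/α) * (Q (A y)) ^ (1/q)
      have hQfin : Q (A y) ≠ ⊤ := measure_ne_top _ _
      have hr : (P (A y)).toReal ≤ (I y).toReal ^ (1/α) * (Q (A y)).toReal ^ (1/q) := by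
        have := ENNReal.toReal_mono (ENNReal.mul_ne_top
            (ENNReal.rpow_ne_top_of_nonneg (one_div_nonneg.mpr hα0.le) (hIfin y))
            (ENNReal.rpow_ne_top_of_nonneg (one_div_nonneg.mpr hpq.symm.nonneg) hQfin)) hold
        rwa [ENNReal.toReal_mul, ← ENNReal.toReal_rpow, ← ENNReal.toReal_rpow] at this
      set p' := (P (A y)).toReal
      set q' := (Q (A y)).toReal
      set i' := (I y).toReal
      have hp'0 : 0 ≤ p' := ENNReal.toReal_nonneg
      have hq'0 : 0 < q' := ENNReal.toReal_pos hQ0 hQfin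
      have hi'0 : 0 ≤ i' := ENNReal.toReal_nonneg
      have h2 : p' ^ α ≤ i' * q' ^ (α - 1) := by
        calc p' ^ α ≤ (i' ^ (1/α) * q' ^ (1/q)) ^ α :=
              Real.rpow_le_rpow hp'0 hr (le_of_lt hα0)
          _ = (i' ^ (1/α)) ^ α * (q' ^ (1/q)) ^ α :=
              Real.mul_rpow (by positivity) (by positivity)
          _ = i' * q' ^ (α - 1) := by
              rw [← Real.rpow_mul hi'0, ← Real.rpow_mul (le_of_lt hq'0)]
              congr 1
              · rw [one_div_mul_cancel (ne_of_gt hα0), Real.rpow_one]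
              · congr 1
                rw [hqdef]
                field_simp
      have h3 : p' ^ α * q' ^ (1 - α) ≤ i' * q' ^ (α - 1) * q' ^ (1 - α) := by
        apply mul_le_mul_of_nonneg_right h2 (Real.rpow_nonneg (le_of_lt hq'0) _)
      calc p' ^ α * q' ^ (1 - α) ≤ i' * q' ^ (α - 1) * q' ^ (1 - α) := h3
        _ = i' * q' ^ ((α - 1) + (1 - α)) := by
            rw [mul_assoc, ← Real.rpow_add hq'0]
        _ = i' := by norm_num
  calc (∑ y : Y, ((P (A y)).toReal) ^ α * ((Q (A y)).toReal) ^ (1 - α))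
      ≤ ∑ y : Y, (I y).toReal := Finset.sum_le_sum (fun y _ => key y)
    _ = (∑ y : Y, I y).toReal := (ENNReal.toReal_sum (fun y _ => hIfin y)).symm
    _ ≤ (∫⁻ x, g x ^ α ∂Q).toReal := by
        apply ENNReal.toReal_mono hfin
        have hdisj : Set.PairwiseDisjoint (↑(Finset.univ : Finset Y)) A := by
          intro a _ b _ hab
          exact Set.disjoint_left.mpr (fun x hxa hxb => hab (by
            simp only [hAdef, Set.mem_preimage, Set.mem_singleton_iff] at hxa hxb
            rw [← hxa, ← hxb]))
        have := lintegral_biUnion_finset hdisj (fun y _ => hA y) (fun x => g x ^ α) (μ := Q)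
        have huniv : (⋃ y ∈ (Finset.univ : Finset Y), A y) = Set.univ := by
          ext x
          simp [hAdef]
        rw [huniv, setLIntegral_univ] at this
        rw [← this]
end

section
/- Let Y be a finite type, P, Q : Y → ℝ probability vectors with P y > 0 and Q y > 0 for all y, α > 1 real, and ε ≥ 0. Assume both Σ_y (P y)^α (Q y)^(1-α) ≤ exp((α-1)·ε) and Σ_y (Q y)^α (P y)^(1-α) ≤ exp((α-1)·ε) (i.e., D_α(P‖Q) ≤ ε and D_α(Q‖P) ≤ ε). Then for every subset S ⊆ Y, exp(-ε) · (Σ_{y ∈ S} Q y)^(α/(α-1)) ≤ Σ_{y ∈ S} P y ≤ exp(ε) · (Σ_{y ∈ S} Q y)^((α-1)/α). -/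
open Real Finset

private lemma holder_step {Y : Type*} [Fintype Y] (P Q : Y → ℝ)
    (hP : ∀ y, 0 < P y) (hQ : ∀ y, 0 < Q y)
    (α : ℝ) (hα : 1 < α) (ε : ℝ)
    (hPQ : ∑ y : Y, (P y) ^ α * (Q y) ^ (1 - α) ≤ Real.exp ((α - 1) * ε))
    (S : Finset Y) :
    (∑ y ∈ S, P y) ≤ Real.exp ((α - 1) * ε / α) * (∑ y ∈ S, Q y) ^ ((α - 1) / α) := by
  have hα0 : (0:ℝ) < α := by linarith
  have hα1 : (0:ℝ) < α - 1 := by linarith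
  have hpq : Real.HolderConjugate α (α / (α - 1)) := by
    rw [Real.holderConjugate_iff]
    constructor
    · exact hα
    · field_simp; ring
  set f : Y → ℝ := fun y => P y * (Q y) ^ ((1 - α) / α) with hf
  set g : Y → ℝ := fun y => (Q y) ^ ((α - 1) / α) with hg
  have hfg : ∀ y, P y = f y * g y := by
    intro y
    simp only [hf, hg, mul_assoc, ← Real.rpow_add (hQ y)]
    have : (1 - α) / α + (α - 1) / α = 0 := by ring
    rw [this, Real.rpow_zero, mul_one]
  have hfpow : ∀ y, f y ^ α = P y ^ α * Q y ^ (1 - α) := by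
    intro y
    rw [hf, Real.mul_rpow (hP y).le (Real.rpow_nonneg (hQ y).le _),
      ← Real.rpow_mul (hQ y).le]
    congr 1
    field_simp
  have hgpow : ∀ y, g y ^ (α / (α - 1)) = Q y := by
    intro y
    rw [hg, ← Real.rpow_mul (hQ y).le]
    rw [show (α - 1) / α * (α / (α - 1)) = 1 by field_simp, Real.rpow_one]
  have holder := Real.inner_le_Lp_mul_Lq_of_nonneg (s := S) (f := f) (g := g) hpq
    (fun y _ => mul_nonneg (hP y).le (Real.rpow_nonneg (hQ y).le _))
    (fun y _ => Real.rpow_nonneg (hQ y).le _)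
  have hsums : ∑ y ∈ S, P y = ∑ y ∈ S, f y * g y := by
    exact Finset.sum_congr rfl fun y _ => hfg y
  rw [hsums]
  refine holder.trans ?_
  have h1 : ∑ y ∈ S, f y ^ α ≤ Real.exp ((α - 1) * ε) := by
    refine le_trans ?_ hPQ
    calc ∑ y ∈ S, f y ^ α = ∑ y ∈ S, P y ^ α * Q y ^ (1 - α) :=
          Finset.sum_congr rfl fun y _ => hfpow y
      _ ≤ ∑ y : Y, P y ^ α * Q y ^ (1 - α) :=
          Finset.sum_le_univ_sum_of_nonneg fun y =>
            mul_nonneg (Real.rpow_nonneg (hP y).le _) (Real.rpow_nonneg (hQ y).le _)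
  have h1' : (∑ y ∈ S, f y ^ α) ^ (1/α) ≤ Real.exp ((α - 1) * ε / α) := by
    have hnn : 0 ≤ ∑ y ∈ S, f y ^ α :=
      Finset.sum_nonneg fun y _ => Real.rpow_nonneg
        (mul_nonneg (hP y).le (Real.rpow_nonneg (hQ y).le _)) _
    calc (∑ y ∈ S, f y ^ α) ^ (1/α) ≤ (Real.exp ((α - 1) * ε)) ^ (1/α) :=
          Real.rpow_le_rpow hnn h1 (by positivity)
      _ = Real.exp ((α - 1) * ε / α) := by
          rw [← Real.exp_mul]; ring_nf
  have h2 : (∑ y ∈ S, g y ^ (α / (α - 1))) ^ (1 / (α / (α - 1)))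
      = (∑ y ∈ S, Q y) ^ ((α - 1) / α) := by
    rw [show (1 / (α / (α - 1))) = (α - 1) / α by field_simp]
    congr 1
    exact Finset.sum_congr rfl fun y _ => hgpow y
  rw [h2]
  exact mul_le_mul_of_nonneg_right h1' (Real.rpow_nonneg
    (Finset.sum_nonneg fun y _ => (hQ y).le) _)

theorem stmt_9 {Y : Type*} [Fintype Y] (P Q : Y → ℝ)
    (hP : ∀ y, 0 < P y) (hQ : ∀ y, 0 < Q y)
    (hPsum : ∑ y : Y, P y = 1) (hQsum : ∑ y : Y, Q y = 1)
    (α : ℝ) (hα : 1 < α) (ε : ℝ) (hε : 0 ≤ ε)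
    (hPQ : ∑ y : Y, (P y) ^ α * (Q y) ^ (1 - α) ≤ Real.exp ((α - 1) * ε))
    (hQP : ∑ y : Y, (Q y) ^ α * (P y) ^ (1 - α) ≤ Real.exp ((α - 1) * ε)) :
    ∀ S : Finset Y,
      Real.exp (-ε) * (∑ y ∈ S, Q y) ^ (α / (α - 1)) ≤ (∑ y ∈ S, P y) ∧
      (∑ y ∈ S, P y) ≤ Real.exp ε * (∑ y ∈ S, Q y) ^ ((α - 1) / α) := by
  intro S
  have hα0 : (0:ℝ) < α := by linarith
  have hα1 : (0:ℝ) < α - 1 := by linarith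
  have hPS : 0 ≤ ∑ y ∈ S, P y := Finset.sum_nonneg fun y _ => (hP y).le
  have hQS : 0 ≤ ∑ y ∈ S, Q y := Finset.sum_nonneg fun y _ => (hQ y).le
  have hexp : Real.exp ((α - 1) * ε / α) ≤ Real.exp ε := by
    apply Real.exp_le_exp.mpr
    rw [div_le_iff₀ hα0]
    nlinarith
  constructor
  · -- lower bound from holder_step for (Q,P)
    have h := holder_step Q P hQ hP α hα ε hQP S
    have hmono := Real.rpow_le_rpow hQS h (by positivity : (0:ℝ) ≤ α / (α - 1))
    have hrw : (Real.exp ((α - 1) * ε / α) * (∑ y ∈ S, P y) ^ ((α - 1) / α)) ^ (α / (α - 1))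
        = Real.exp ε * (∑ y ∈ S, P y) := by
      rw [Real.mul_rpow (Real.exp_pos _).le (Real.rpow_nonneg hPS _),
        ← Real.rpow_mul hPS, ← Real.exp_mul,
        show (α - 1) * ε / α * (α / (α - 1)) = ε by field_simp,
        show (α - 1) / α * (α / (α - 1)) = 1 by field_simp, Real.rpow_one]
    rw [hrw] at hmono
    calc Real.exp (-ε) * (∑ y ∈ S, Q y) ^ (α / (α - 1))
        ≤ Real.exp (-ε) * (Real.exp ε * (∑ y ∈ S, P y)) :=
          mul_le_mul_of_nonneg_left hmono (Real.exp_pos _).le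
      _ = ∑ y ∈ S, P y := by rw [← mul_assoc, ← Real.exp_add]; simp
  · have h := holder_step P Q hP hQ α hα ε hPQ S
    refine h.trans (mul_le_mul_of_nonneg_right hexp (Real.rpow_nonneg hQS _))
end

section
/- Let Y be a finite type, P, Q : Y → ℝ probability vectors with P y ≥ 0 and Q y > 0 for all y, α > 1 real, ε ≥ 0, and δ ∈ (0, 1). Assume Σ_y (P y)^α (Q y)^(1-α) ≤ exp((α-1)·ε), i.e., D_α(P‖Q) ≤ ε. Then for every subset S ⊆ Y, Σ_{y ∈ S} P y ≤ exp(ε + log(1/δ)/(α-1)) · Σ_{y ∈ S} Q y + δ. -/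
theorem stmt_10 {Y : Type*} [Fintype Y] (P Q : Y → ℝ)
    (hP : ∀ y, 0 ≤ P y) (hQ : ∀ y, 0 < Q y)
    (hPsum : ∑ y : Y, P y = 1) (hQsum : ∑ y : Y, Q y = 1)
    (α : ℝ) (hα : 1 < α) (ε : ℝ) (hε : 0 ≤ ε)
    (δ : ℝ) (hδ0 : 0 < δ) (hδ1 : δ < 1)
    (hRDP : ∑ y : Y, (P y) ^ α * (Q y) ^ (1 - α) ≤ Real.exp ((α - 1) * ε)) :
    ∀ S : Finset Y,
      (∑ y ∈ S, P y) ≤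
        Real.exp (ε + Real.log (1 / δ) / (α - 1)) * (∑ y ∈ S, Q y) + δ := by
  intro S
  set ε' : ℝ := ε + Real.log (1 / δ) / (α - 1) with hε'
  set E : ℝ := Real.exp ε' with hEdef
  have hE0 : (0:ℝ) < E := Real.exp_pos _
  have hα1 : (0:ℝ) < α - 1 := by linarith
  classical
  set S1 := S.filter (fun y => E * Q y < P y) with hS1
  -- pointwise bound on S1
  have key : ∀ y ∈ S1, P y * Real.exp ((α - 1) * ε') ≤ P y ^ α * Q y ^ (1 - α) := by
    intro y hy
    have hy' : E * Q y < P y := (Finset.mem_filter.mp hy).2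
    have hQy := hQ y
    have hPy : 0 < P y := lt_trans (by positivity) hy'
    have hdiv : E ≤ P y / Q y := (le_div_iff₀ hQy).mpr (by linarith [mul_comm E (Q y)])
    have h1 : P y ^ α * Q y ^ (1 - α) = P y * (P y / Q y) ^ (α - 1) := by
      rw [Real.div_rpow hPy.le hQy.le]
      rw [show α = 1 + (α - 1) by ring, Real.rpow_add hPy, Real.rpow_one]
      rw [show (1 : ℝ) - (1 + (α - 1)) = -(α - 1) by ring, Real.rpow_neg hQy.le]
      field_simp
      rw [show (1:ℝ) + (α - 1) - 1 = α - 1 by ring]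
      ring
    have h2 : E ^ (α - 1) ≤ (P y / Q y) ^ (α - 1) :=
      Real.rpow_le_rpow hE0.le hdiv hα1.le
    have h3 : E ^ (α - 1) = Real.exp ((α - 1) * ε') := by
      rw [hEdef, ← Real.exp_log (Real.exp_pos ε'), Real.log_exp, ← Real.exp_mul]
      ring_nf
    calc P y * Real.exp ((α - 1) * ε') = P y * E ^ (α - 1) := by rw [h3]
      _ ≤ P y * (P y / Q y) ^ (α - 1) := by
          exact mul_le_mul_of_nonneg_left h2 hPy.le
      _ = P y ^ α * Q y ^ (1 - α) := h1.symm
  -- sum bound on S1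
  have hsum1 : (∑ y ∈ S1, P y) * Real.exp ((α - 1) * ε') ≤ Real.exp ((α - 1) * ε) := by
    rw [Finset.sum_mul]
    calc ∑ y ∈ S1, P y * Real.exp ((α - 1) * ε')
        ≤ ∑ y ∈ S1, P y ^ α * Q y ^ (1 - α) := Finset.sum_le_sum key
      _ ≤ ∑ y : Y, P y ^ α * Q y ^ (1 - α) := by
          apply Finset.sum_le_sum_of_subset_of_nonneg (Finset.subset_univ _)
          intro y _ _
          have h1 := hP y
          have h2 := (hQ y).le
          positivity
      _ ≤ Real.exp ((α - 1) * ε) := hRDP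
  have hδexp : Real.exp ((α - 1) * ε) / Real.exp ((α - 1) * ε') = δ := by
    rw [← Real.exp_sub]
    have : (α - 1) * ε - (α - 1) * ε' = Real.log δ := by
      rw [hε']
      have hlog : Real.log (1 / δ) = -Real.log δ := by
        rw [one_div, Real.log_inv]
      field_simp [hlog]
      ring
      rw [Real.log_inv, neg_neg]
    rw [this, Real.exp_log hδ0]
  have hS1P : ∑ y ∈ S1, P y ≤ δ := by
    rw [← hδexp]
    rw [le_div_iff₀ (Real.exp_pos _)]
    exact hsum1
  -- split
  have hsplit : ∑ y ∈ S, P y = (∑ y ∈ S \ S1, P y) + ∑ y ∈ S1, P y := by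
    rw [Finset.sum_sdiff (Finset.filter_subset _ _)]
  have h2 : ∑ y ∈ S \ S1, P y ≤ E * ∑ y ∈ S, Q y := by
    calc ∑ y ∈ S \ S1, P y ≤ ∑ y ∈ S \ S1, E * Q y := by
          apply Finset.sum_le_sum
          intro y hy
          have hmem := Finset.mem_sdiff.mp hy
          have : ¬ (E * Q y < P y) := by
            intro h
            exact hmem.2 (Finset.mem_filter.mpr ⟨hmem.1, h⟩)
          linarith [not_lt.mp this]
      _ ≤ ∑ y ∈ S, E * Q y := by
          apply Finset.sum_le_sum_of_subset_of_nonneg (Finset.sdiff_subset)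
          intro y _ _
          exact mul_nonneg hE0.le (hQ y).le
      _ = E * ∑ y ∈ S, Q y := by rw [Finset.mul_sum]
  calc ∑ y ∈ S, P y = (∑ y ∈ S \ S1, P y) + ∑ y ∈ S1, P y := hsplit
    _ ≤ E * ∑ y ∈ S, Q y + δ := add_le_add h2 hS1P
end

section
/- Let H be a real inner product space (a complete InnerProductSpace over ℝ), θ ∈ H, ν > 0, G ≥ 0, η > 0, and m a natural number with m·η·G < ν. Let N ≥ 1, and for each agent i ∈ Fin N let fᵢ : H → ℝ and gᵢ ∈ H be such that fᵢ has gradient gᵢ at every point of the open ball of radius ν around θ (HasGradientAt fᵢ gᵢ x for all x with ‖x - θ‖ < ν) and ‖gᵢ‖ ≤ G. Define the inner-loop gradient-descent iterates xᵢ : ℕ → H by xᵢ 0 = θ and xᵢ (k+1) = xᵢ k - η • gradient fᵢ (xᵢ k). Then for every i, xᵢ m = θ - (m·η) • gᵢ, and consequently the FedAvg outer-loop update θ + (1/N) • Σᵢ (xᵢ m - θ) equals θ - (m·η) • ((1/N) • Σᵢ gᵢ), i.e., one full-gradient step with learning rate m·η on the global objective F = (1/N)Σᵢ fᵢ. -/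
theorem stmt_12 {H : Type*} [NormedAddCommGroup H] [InnerProductSpace ℝ H]
    [CompleteSpace H] (θ : H) (ν : ℝ) (hν : 0 < ν) (G : ℝ) (hG : 0 ≤ G)
    (η : ℝ) (hη : 0 < η) (m : ℕ) (hm : (m : ℝ) * η * G < ν)
    (N : ℕ) (hN : 1 ≤ N) (f : Fin N → H → ℝ) (g : Fin N → H)
    (hgrad : ∀ i, ∀ x : H, ‖x - θ‖ < ν → HasGradientAt (f i) (g i) x)
    (hGbd : ∀ i, ‖g i‖ ≤ G)
    (x : Fin N → ℕ → H) (hx0 : ∀ i, x i 0 = θ)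
    (hxs : ∀ i k, x i (k + 1) = x i k - η • gradient (f i) (x i k)) :
    (∀ i, x i m = θ - ((m : ℝ) * η) • g i) ∧
    θ + (1 / (N : ℝ)) • ∑ i : Fin N, (x i m - θ) =
      θ - ((m : ℝ) * η) • ((1 / (N : ℝ)) • ∑ i : Fin N, g i) := by
  have key : ∀ i, ∀ k ≤ m, x i k = θ - ((k : ℝ) * η) • g i := by
    intro i k hk
    induction k with
    | zero => simp [hx0 i]
    | succ k ih =>
      have hk' : k ≤ m := Nat.le_of_succ_le hk
      have hxk := ih hk'
      have hnorm : ‖x i k - θ‖ < ν := by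
        rw [hxk]
        have : ‖θ - ((k : ℝ) * η) • g i - θ‖ = (k : ℝ) * η * ‖g i‖ := by
          rw [sub_sub_cancel_left, norm_neg, norm_smul, Real.norm_eq_abs,
            abs_of_nonneg (by positivity)]
        rw [this]
        have h1 : (k : ℝ) ≤ m := by exact_mod_cast hk'
        have h2 : (k : ℝ) * η * ‖g i‖ ≤ (m : ℝ) * η * G :=
          mul_le_mul (mul_le_mul_of_nonneg_right h1 hη.le) (hGbd i)
            (norm_nonneg _) (by positivity)
        linarith
      have hgr : gradient (f i) (x i k) = g i := (hgrad i _ hnorm).gradient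
      rw [hxs i k, hgr, hxk]
      push_cast
      rw [sub_sub, ← add_smul]
      ring_nf
  refine ⟨fun i => key i m le_rfl, ?_⟩
  have hd : ∀ i : Fin N, x i m - θ = -(((m : ℝ) * η) • g i) := fun i => by
    rw [key i m le_rfl]; abel
  have hsum : ∑ i : Fin N, (x i m - θ) = -(((m : ℝ) * η) • ∑ i : Fin N, g i) := by
    simp only [hd]
    rw [Finset.sum_neg_distrib, Finset.smul_sum]
  rw [hsum]
  rw [smul_neg, smul_comm]
  abel
end
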